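/- Let X be a compact metric space and f : X → 2^X a transitive open set-valued map. Then Ω_final(f) = f(X), and this set is dense in X. -/
import Mathlib


open Metric Set

/-- n-fold relational composition: `fIter f 0 x = {x}`, `fIter f (n+1) x = ⋃ y ∈ fIter f n x, f y`. -/
def fIter {X : Type*} (f : X → Set X) : ℕ → X → Set X
  | 0, x => {x}
  | n + 1, x => ⋃ y ∈ fIter f n x, f y

/-- Image of a set under the n-fold composition. -/
def fIterS {X : Type*} (f : X → Set X) (n : ℕ) (A : Set X) : Set X :=
  ⋃ a ∈ A, fIter f n a

/-- `x ⇝ y`: there is a finite trajectory of length ≥ 1 from `x` to `y`. -/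
def Reach {X : Type*} (f : X → Set X) (x y : X) : Prop :=
  ∃ n, 1 ≤ n ∧ y ∈ fIter f n x

/-- The recurrent set `Ω(f)`. -/
def Omega {X : Type*} (f : X → Set X) : Set X := {x | Reach f x x}

/-- The final recurrent set `Ω_final(f)`. -/
def OmegaFinal {X : Type*} (f : X → Set X) : Set X :=
  {x | ∀ y, Reach f x y → Reach f y x}

/-- `f` is an open set-valued map: open graph and nonempty open connected values. -/
def IsOpenSVM {X : Type*} [TopologicalSpace X] (f : X → Set X) : Prop :=
  IsOpen {p : X × X | p.2 ∈ f p.1} ∧ ∀ x, IsOpen (f x) ∧ IsConnected (f x)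

/-- `f` is transitive. -/
def SVMTransitive {X : Type*} [TopologicalSpace X] (f : X → Set X) : Prop :=
  ∀ A B : Set X, IsOpen A → A.Nonempty → IsOpen B → B.Nonempty →
    ∃ n, 1 ≤ n ∧ (fIterS f n A ∩ B).Nonempty

lemma fIter_one {X : Type*} (f : X → Set X) (x : X) : fIter f 1 x = f x := by
  simp [fIter]

lemma fIter_succ_mem {X : Type*} (f : X → Set X) {x y z : X} {n : ℕ}
    (hy : y ∈ fIter f n x) (hz : z ∈ f y) : z ∈ fIter f (n + 1) x :=
  Set.mem_biUnion hy hz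

lemma fIter_comp {X : Type*} (f : X → Set X) {x y : X} {n : ℕ}
    (hy : y ∈ fIter f n x) : ∀ {m : ℕ} {z : X}, z ∈ fIter f m y → z ∈ fIter f (n + m) x := by
  intro m
  induction m with
  | zero =>
    intro z hz
    simp only [fIter, Set.mem_singleton_iff] at hz
    subst hz; simpa using hy
  | succ m ih =>
    intro z hz
    simp only [fIter, Set.mem_iUnion, exists_prop] at hz
    obtain ⟨w, hw, hzw⟩ := hz
    exact fIter_succ_mem f (ih hw) hzw

lemma fIter_open {X : Type*} [TopologicalSpace X] {f : X → Set X} (hf : IsOpenSVM f)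
    (n : ℕ) (x : X) : IsOpen (fIter f (n + 1) x) := by
  show IsOpen (⋃ y ∈ fIter f n x, f y)
  exact isOpen_biUnion fun y _ => (hf.2 y).1

lemma fIter_nonempty {X : Type*} [TopologicalSpace X] {f : X → Set X} (hf : IsOpenSVM f)
    (n : ℕ) (x : X) : (fIter f n x).Nonempty := by
  induction n with
  | zero => exact ⟨x, rfl⟩
  | succ n ih =>
    obtain ⟨y, hy⟩ := ih
    obtain ⟨z, hz⟩ := (hf.2 y).2.nonempty
    exact ⟨z, fIter_succ_mem f hy hz⟩

/-- The reachable set from `y` is open and dense. -/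
lemma reach_open_dense {X : Type*} [TopologicalSpace X] {f : X → Set X}
    (hf : IsOpenSVM f) (htrans : SVMTransitive f) (y : X) :
    IsOpen {z | Reach f y z} ∧ Dense {z | Reach f y z} := by
  have heq : {z | Reach f y z} = ⋃ n : ℕ, fIter f (n + 1) y := by
    ext z
    simp only [Set.mem_setOf_eq, Reach, Set.mem_iUnion]
    constructor
    · rintro ⟨n, hn, hz⟩
      obtain ⟨m, rfl⟩ := Nat.exists_eq_add_of_le hn
      exact ⟨m, by simpa [Nat.add_comm] using hz⟩
    · rintro ⟨n, hz⟩
      exact ⟨n + 1, Nat.le_add_left 1 n, hz⟩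
  have hopen : IsOpen {z | Reach f y z} := by
    rw [heq]; exact isOpen_iUnion (fun n => fIter_open hf n y)
  refine ⟨hopen, ?_⟩
  rw [dense_iff_inter_open]
  intro U hU hUne
  have hRne : {z | Reach f y z}.Nonempty := by
    obtain ⟨w, hw⟩ := (hf.2 y).2.nonempty
    exact ⟨w, 1, le_refl 1, by rwa [fIter_one]⟩
  obtain ⟨n, hn, w, hw1, hw2⟩ := htrans _ U hopen hRne hU hUne
  simp only [fIterS, Set.mem_iUnion, exists_prop] at hw1
  obtain ⟨a, ⟨k, hk, hak⟩, hwa⟩ := hw1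
  exact ⟨w, hw2, k + n, le_trans hk (Nat.le_add_right k n), fIter_comp f hak hwa⟩

/-- Any point in the image of `f` reaches back from anywhere it can reach. -/
lemma mem_image_mem_omegaFinal {X : Type*} [TopologicalSpace X] {f : X → Set X}
    (hf : IsOpenSVM f) (htrans : SVMTransitive f) {a x : X} (hx : x ∈ f a) :
    x ∈ OmegaFinal f := by
  intro y hxy
  -- open graph: get U ∋ a, W ∋ x with U ×ˢ W ⊆ graph
  obtain ⟨U, W, hUo, hWo, haU, hxW, hUW⟩ :=
    (isOpen_prod_iff.mp hf.1) a x hx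
  obtain ⟨hRo, hRd⟩ := reach_open_dense hf htrans y
  obtain ⟨a', ha'U, ha'R⟩ := hRd.inter_open_nonempty U hUo ⟨a, haU⟩
  obtain ⟨k, hk, ha'k⟩ := ha'R
  have hxfa' : x ∈ f a' := hUW (Set.mk_mem_prod ha'U hxW)
  exact ⟨k + 1, le_trans hk (Nat.le_succ k), fIter_succ_mem f ha'k hxfa'⟩

theorem stmt_9 {X : Type*} [MetricSpace X] [CompactSpace X] (f : X → Set X)
    (hf : IsOpenSVM f) (htrans : SVMTransitive f) :
    OmegaFinal f = (⋃ x : X, f x) ∧ Dense (OmegaFinal f) := by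
  have heq : OmegaFinal f = (⋃ x : X, f x) := by
    ext x
    constructor
    · intro hx
      obtain ⟨y, hy⟩ := (hf.2 x).2.nonempty
      have hxy : Reach f x y := ⟨1, le_refl 1, by rwa [fIter_one]⟩
      obtain ⟨n, hn, hxn⟩ := hx y hxy
      obtain ⟨m, rfl⟩ := Nat.exists_eq_add_of_le hn
      have : x ∈ fIter f (m + 1) y := by simpa [Nat.add_comm] using hxn
      simp only [fIter, Set.mem_iUnion, exists_prop] at this
      obtain ⟨w, _, hxw⟩ := this
      exact Set.mem_iUnion.mpr ⟨w, hxw⟩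
    · intro hx
      obtain ⟨a, ha⟩ := Set.mem_iUnion.mp hx
      exact mem_image_mem_omegaFinal hf htrans ha
  refine ⟨heq, ?_⟩
  rw [heq, dense_iff_inter_open]
  intro U hU hUne
  obtain ⟨n, hn, w, hw1, hw2⟩ := htrans U U hU hUne hU hUne
  simp only [fIterS, Set.mem_iUnion, exists_prop] at hw1
  obtain ⟨a, _, hwa⟩ := hw1
  obtain ⟨m, rfl⟩ := Nat.exists_eq_add_of_le hn
  have : w ∈ fIter f (m + 1) a := by simpa [Nat.add_comm] using hwa
  simp only [fIter, Set.mem_iUnion, exists_prop] at this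
  obtain ⟨v, _, hwv⟩ := this
  exact ⟨w, hw2, Set.mem_iUnion.mpr ⟨v, hwv⟩⟩
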